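/- Let m : ℝ → ℝ be continuous, bounded and Lebesgue integrable. Define u = p∗m and u_x as the kernel integrals. Then u is differentiable on ℝ with u'(x) = u_x(x) for every x, u_x is differentiable on ℝ with u_x'(x) = u(x) − m(x) for every x; in particular u − u'' = m, i.e. u = (1−∂_x²)^{−1} m. -/

import Mathlib

open MeasureTheory

/-- `u = p ∗ m`, where `p(x) = (1/2) e^{-|x|}`. -/
noncomputable def pConv (m : ℝ → ℝ) (x : ℝ) : ℝ :=
  (1 / 2) * ∫ y : ℝ, Real.exp (-|x - y|) * m y

/-- `u_x = (∂ₓ p) ∗ m`, where `p(x) = (1/2) e^{-|x|}`. -/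
noncomputable def pxConv (m : ℝ → ℝ) (x : ℝ) : ℝ :=
  -(1 / 2) * ∫ y : ℝ, Real.sign (x - y) * Real.exp (-|x - y|) * m y

open Set in
lemma measurable_realSign : Measurable Real.sign := by
  have h : Real.sign = fun r : ℝ => if r < 0 then (-1 : ℝ) else if 0 < r then 1 else 0 := rfl
  rw [h]
  exact Measurable.ite measurableSet_Iio measurable_const
    (Measurable.ite measurableSet_Ioi measurable_const measurable_const)

open Set in
/-- `e^y m y` is integrable on `Iic a`. -/
lemma fIntOn (m : ℝ → ℝ) (hcont : Continuous m) (hint : Integrable m) (a : ℝ) :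
    IntegrableOn (fun y => Real.exp y * m y) (Iic a) := by
  apply Integrable.mono' ((hint.norm.const_mul (Real.exp a)).restrict)
  · exact ((Real.continuous_exp.mul hcont).aestronglyMeasurable).restrict
  · filter_upwards [ae_restrict_mem measurableSet_Iic] with y hy
    rw [norm_mul, Real.norm_eq_abs, Real.abs_exp]
    exact mul_le_mul_of_nonneg_right (Real.exp_le_exp.2 hy) (norm_nonneg _)

open Set in
/-- `e^{-y} m y` is integrable on `Ici a`. -/
lemma gIntOn (m : ℝ → ℝ) (hcont : Continuous m) (hint : Integrable m) (a : ℝ) :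
    IntegrableOn (fun y => Real.exp (-y) * m y) (Ici a) := by
  apply Integrable.mono' ((hint.norm.const_mul (Real.exp (-a))).restrict)
  · exact (((Real.continuous_exp.comp continuous_neg).mul hcont).aestronglyMeasurable).restrict
  · filter_upwards [ae_restrict_mem measurableSet_Ici] with y hy
    rw [norm_mul, Real.norm_eq_abs, Real.abs_exp]
    exact mul_le_mul_of_nonneg_right (Real.exp_le_exp.2 (neg_le_neg hy)) (norm_nonneg _)

open Set in
lemma integral_Ici_sub_Ici {g : ℝ → ℝ} {a b : ℝ} (ha : IntegrableOn g (Ici a))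
    (hb : IntegrableOn g (Ici b)) :
    (∫ x in Ici a, g x) - ∫ x in Ici b, g x = ∫ x in a..b, g x := by
  wlog hab : a ≤ b generalizing a b
  · rw [← neg_sub, this hb ha (le_of_not_ge hab), ← intervalIntegral.integral_symm]
  have hdisj : Disjoint (Ico a b) (Ici b) :=
    (Iio_disjoint_Ici le_rfl).mono_left Ico_subset_Iio_self
  have hsplit := setIntegral_union hdisj measurableSet_Ici
    (ha.mono_set Ico_subset_Ici_self) hb (f := g) (μ := volume)
  rw [Ico_union_Ici_eq_Ici hab] at hsplit
  rw [intervalIntegral.integral_of_le hab, integral_Ioc_eq_integral_Ioo,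
    ← integral_Ico_eq_integral_Ioo]
  linarith

open Set in
/-- The cumulative integral `A a = ∫_{y ≤ a} e^y m y`. -/
lemma hasDerivAt_AInt (m : ℝ → ℝ) (hcont : Continuous m) (hint : Integrable m) (x : ℝ) :
    HasDerivAt (fun a => ∫ y in Iic a, Real.exp y * m y) (Real.exp x * m x) x := by
  have hfc : Continuous fun y => Real.exp y * m y := Real.continuous_exp.mul hcont
  have key : (fun a => ∫ y in Iic a, Real.exp y * m y) =
      fun a => (∫ y in Iic (0 : ℝ), Real.exp y * m y) + ∫ t in (0 : ℝ)..a, Real.exp t * m t := by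
    funext a
    have := intervalIntegral.integral_Iic_sub_Iic (fIntOn m hcont hint 0) (fIntOn m hcont hint a)
    linarith
  rw [key]
  exact (intervalIntegral.integral_hasDerivAt_right (hfc.intervalIntegrable _ _)
    hfc.stronglyMeasurable.stronglyMeasurableAtFilter hfc.continuousAt).const_add _

open Set in
/-- The tail integral `B a = ∫_{y ≥ a} e^{-y} m y`. -/
lemma hasDerivAt_BInt (m : ℝ → ℝ) (hcont : Continuous m) (hint : Integrable m) (x : ℝ) :
    HasDerivAt (fun a => ∫ y in Ici a, Real.exp (-y) * m y) (-(Real.exp (-x) * m x)) x := by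
  have hgc : Continuous fun y => Real.exp (-y) * m y :=
    (Real.continuous_exp.comp continuous_neg).mul hcont
  have key : (fun a => ∫ y in Ici a, Real.exp (-y) * m y) =
      fun a => (∫ y in Ici (0 : ℝ), Real.exp (-y) * m y)
        - ∫ t in (0 : ℝ)..a, Real.exp (-t) * m t := by
    funext a
    have := integral_Ici_sub_Ici (gIntOn m hcont hint 0) (gIntOn m hcont hint a)
    linarith
  rw [key]
  have h := (hasDerivAt_const x (∫ y in Ici (0 : ℝ), Real.exp (-y) * m y)).sub
    (intervalIntegral.integral_hasDerivAt_right (hgc.intervalIntegrable (0 : ℝ) x)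
      hgc.stronglyMeasurable.stronglyMeasurableAtFilter hgc.continuousAt)
  rw [zero_sub] at h
  exact h

open Set in
lemma pConv_eq (m : ℝ → ℝ) (hcont : Continuous m) (hint : Integrable m) (x : ℝ) :
    pConv m x = (1 / 2) * (Real.exp (-x) * (∫ y in Iic x, Real.exp y * m y)
      + Real.exp x * ∫ y in Ici x, Real.exp (-y) * m y) := by
  have hIic : EqOn (fun y => Real.exp (-|x - y|) * m y)
      (fun y => Real.exp (-x) * (Real.exp y * m y)) (Iic x) := by
    intro y hy
    simp only [mem_Iic] at hy
    show Real.exp (-|x - y|) * m y = _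
    rw [abs_of_nonneg (by linarith : (0:ℝ) ≤ x - y),
      show -(x - y) = y + -x from by ring, Real.exp_add]
    ring
  have hIoi : EqOn (fun y => Real.exp (-|x - y|) * m y)
      (fun y => Real.exp x * (Real.exp (-y) * m y)) (Ioi x) := by
    intro y hy
    simp only [mem_Ioi] at hy
    show Real.exp (-|x - y|) * m y = _
    rw [abs_of_nonpos (by linarith : x - y ≤ 0),
      show - -(x - y) = x + -y from by ring, Real.exp_add]
    ring
  have hi1 : IntegrableOn (fun y => Real.exp (-|x - y|) * m y) (Iic x) :=
    IntegrableOn.congr_fun ((fIntOn m hcont hint x).const_mul (Real.exp (-x)))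
      (fun y hy => (hIic hy).symm) measurableSet_Iic
  have hi2 : IntegrableOn (fun y => Real.exp (-|x - y|) * m y) (Ioi x) :=
    IntegrableOn.congr_fun
      (IntegrableOn.mono_set ((gIntOn m hcont hint x).const_mul (Real.exp x))
        Ioi_subset_Ici_self)
      (fun y hy => (hIoi hy).symm) measurableSet_Ioi
  have hsplit := intervalIntegral.integral_Iic_add_Ioi hi1 hi2
  rw [pConv, ← hsplit, setIntegral_congr_fun measurableSet_Iic hIic,
    setIntegral_congr_fun measurableSet_Ioi hIoi, integral_const_mul, integral_const_mul,
    ← integral_Ici_eq_integral_Ioi]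

open Set in
lemma pxConv_eq (m : ℝ → ℝ) (hcont : Continuous m) (hint : Integrable m) (x : ℝ) :
    pxConv m x = (1 / 2) * (Real.exp x * (∫ y in Ici x, Real.exp (-y) * m y)
      - Real.exp (-x) * ∫ y in Iic x, Real.exp y * m y) := by
  set G : ℝ → ℝ := fun y => Real.sign (x - y) * Real.exp (-|x - y|) * m y with hG
  have hGmeas : AEStronglyMeasurable G volume := by
    apply Measurable.aestronglyMeasurable
    exact ((measurable_realSign.comp (measurable_const.sub measurable_id)).mul
      (Real.continuous_exp.comp (continuous_abs.comp
        (continuous_const.sub continuous_id)).neg).measurable).mul hcont.measurable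
  have hGint : Integrable G := by
    apply hint.norm.mono' hGmeas
    filter_upwards with y
    rw [hG]
    simp only [norm_mul, Real.norm_eq_abs]
    have h1 : |Real.sign (x - y)| ≤ 1 := by
      rcases Real.sign_apply_eq (x - y) with h | h | h <;> rw [h] <;> norm_num
    have h2 : |Real.exp (-|x - y|)| ≤ 1 := by
      rw [Real.abs_exp]
      exact Real.exp_le_one_iff.mpr (neg_nonpos.mpr (abs_nonneg _))
    calc |Real.sign (x - y)| * |Real.exp (-|x - y|)| * |m y|
        ≤ 1 * 1 * |m y| := by
          apply mul_le_mul_of_nonneg_right _ (abs_nonneg _)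
          exact mul_le_mul h1 h2 (abs_nonneg _) zero_le_one
      _ = |m y| := by ring
  have hIio : EqOn G (fun y => Real.exp (-x) * (Real.exp y * m y)) (Iio x) := by
    intro y hy
    simp only [mem_Iio] at hy
    show Real.sign (x - y) * Real.exp (-|x - y|) * m y = _
    rw [Real.sign_of_pos (by linarith : (0:ℝ) < x - y),
      abs_of_nonneg (by linarith : (0:ℝ) ≤ x - y),
      show -(x - y) = y + -x from by ring, Real.exp_add]
    ring
  have hIoi : EqOn G (fun y => -(Real.exp x * (Real.exp (-y) * m y))) (Ioi x) := by
    intro y hy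
    simp only [mem_Ioi] at hy
    show Real.sign (x - y) * Real.exp (-|x - y|) * m y = _
    rw [Real.sign_of_neg (by linarith : x - y < 0),
      abs_of_nonpos (by linarith : x - y ≤ 0),
      show - -(x - y) = x + -y from by ring, Real.exp_add]
    ring
  have hsplit := intervalIntegral.integral_Iio_add_Ici (hGint.integrableOn (s := Iio x))
    (hGint.integrableOn (s := Ici x))
  rw [pxConv, ← hsplit, integral_Ici_eq_integral_Ioi,
    setIntegral_congr_fun measurableSet_Iio hIio,
    setIntegral_congr_fun measurableSet_Ioi hIoi,
    integral_const_mul, integral_neg, integral_const_mul,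
    ← integral_Ici_eq_integral_Ioi, ← integral_Iic_eq_integral_Iio]
  ring

/-- If `m` is continuous, bounded and integrable, then `u = p ∗ m` satisfies
`u' = u_x`, `u_x' = u - m`; in particular `u - u'' = m`,
i.e. `u = (1 - ∂ₓ²)⁻¹ m`. -/
theorem pConv_solves_helmholtz (m : ℝ → ℝ) (hcont : Continuous m)
    (hbd : BddAbove (Set.range fun y => |m y|)) (hint : Integrable m) :
    (∀ x : ℝ, HasDerivAt (pConv m) (pxConv m x) x) ∧
    (∀ x : ℝ, HasDerivAt (pxConv m) (pConv m x - m x) x) ∧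
    (∀ x : ℝ, pConv m x - deriv (deriv (pConv m)) x = m x) := by
  set A : ℝ → ℝ := fun a => ∫ y in Set.Iic a, Real.exp y * m y with hA
  set B : ℝ → ℝ := fun a => ∫ y in Set.Ici a, Real.exp (-y) * m y with hB
  have hAd : ∀ x, HasDerivAt A (Real.exp x * m x) x := hasDerivAt_AInt m hcont hint
  have hBd : ∀ x, HasDerivAt B (-(Real.exp (-x) * m x)) x := hasDerivAt_BInt m hcont hint
  have hexpneg : ∀ x : ℝ, HasDerivAt (fun x => Real.exp (-x)) (-Real.exp (-x)) x := by
    intro x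
    have := (Real.hasDerivAt_exp (-x)).comp x ((hasDerivAt_id x).neg)
    rw [mul_neg_one] at this
    exact this
  have hu : pConv m = fun x => (1 / 2) * (Real.exp (-x) * A x + Real.exp x * B x) :=
    funext fun x => pConv_eq m hcont hint x
  have hux : pxConv m = fun x => (1 / 2) * (Real.exp x * B x - Real.exp (-x) * A x) :=
    funext fun x => pxConv_eq m hcont hint x
  have part1 : ∀ x : ℝ, HasDerivAt (pConv m) (pxConv m x) x := by
    intro x
    rw [hu]
    have h := (((hexpneg x).mul (hAd x)).add ((Real.hasDerivAt_exp x).mul (hBd x))).const_mul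
      (1 / 2 : ℝ)
    convert h using 1
    · rfl
    · rfl
    · rfl
    rw [hux]
    ring
  have part2 : ∀ x : ℝ, HasDerivAt (pxConv m) (pConv m x - m x) x := by
    intro x
    rw [hux]
    have h := (((Real.hasDerivAt_exp x).mul (hBd x)).sub ((hexpneg x).mul (hAd x))).const_mul
      (1 / 2 : ℝ)
    convert h using 1
    · rfl
    · rfl
    · rfl
    rw [hu]
    have hxx : Real.exp (-x) * Real.exp x = 1 := by
      rw [← Real.exp_add]; simp
    simp only
    linear_combination (m x) * hxx
  refine ⟨part1, part2, fun x => ?_⟩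
  have hd1 : deriv (pConv m) = pxConv m := funext fun x => (part1 x).deriv
  rw [hd1, (part2 x).deriv]
  ring
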